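/- For nonnegative integers i and n, let I(i,n) denote the number of permutations σ of {1,…,n} of length i, i.e. with exactly i inversions (pairs a < b with σ(a) > σ(b)). Then for each fixed i ≥ 1, there is a polynomial f ∈ ℚ[t] of degree i such that I(i,n) = f(n) for all sufficiently large n. -/

import Mathlib

open Filter

/-- The number of inversions (the length) of a permutation of `Fin n`:
the number of pairs `a < b` with `σ a > σ b`. -/
def permInversions (n : ℕ) (σ : Equiv.Perm (Fin n)) : ℕ :=
  (Finset.univ.filter (fun p : Fin n × Fin n => p.1 < p.2 ∧ σ p.2 < σ p.1)).card

/-- `I i n` is the number of permutations of `{1, …, n}` with exactly `i` inversions. -/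
def numPermsWithInversions (i n : ℕ) : ℕ :=
  (Finset.univ.filter (fun σ : Equiv.Perm (Fin n) => permInversions n σ = i)).card

open Finset

/-- Insert a new largest position: `insPerm p e` sends `0 ↦ p` and `i.succ ↦ p.succAbove (e i)`. -/
def insPerm {n : ℕ} (p : Fin (n+1)) (e : Equiv.Perm (Fin n)) : Equiv.Perm (Fin (n+1)) :=
  (finSuccEquiv' (0 : Fin (n+1))).trans ((e.optionCongr).trans (finSuccEquiv' p).symm)

@[simp] lemma insPerm_zero {n : ℕ} (p : Fin (n+1)) (e : Equiv.Perm (Fin n)) :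
    insPerm p e 0 = p := by
  simp [insPerm]

@[simp] lemma insPerm_succ {n : ℕ} (p : Fin (n+1)) (e : Equiv.Perm (Fin n)) (i : Fin n) :
    insPerm p e i.succ = p.succAbove (e i) := by
  have h : finSuccEquiv' (0 : Fin (n+1)) i.succ = some i := by
    have := finSuccEquiv'_succAbove (0 : Fin (n+1)) i
    rwa [Fin.succAbove_zero] at this
  simp [insPerm, h]

lemma card_filter_val_lt (n k : ℕ) (hk : k ≤ n) :
    (Finset.univ.filter fun j : Fin n => (j:ℕ) < k).card = k := by
  rw [Finset.card_filter, Fin.sum_univ_eq_sum_range (fun j => if j < k then (1:ℕ) else 0),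
    ← Finset.card_filter]
  have : (Finset.range n).filter (fun j => j < k) = Finset.range k := by
    ext x; simp; omega
  rw [this, Finset.card_range]

lemma inv_insPerm {n : ℕ} (p : Fin (n+1)) (e : Equiv.Perm (Fin n)) :
    permInversions (n+1) (insPerm p e) = p + permInversions n e := by
  have hcard : ∀ (m : ℕ) (σ : Equiv.Perm (Fin m)), permInversions m σ =
      ∑ a : Fin m, ∑ b : Fin m, if a < b ∧ σ b < σ a then 1 else 0 := by
    intro m σ
    rw [permInversions, Finset.card_filter, Fintype.sum_prod_type]
  rw [hcard, hcard, Fin.sum_univ_succ]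
  have h1 : ∑ b : Fin (n+1), (if (0:Fin (n+1)) < b ∧ insPerm p e b < insPerm p e 0 then 1 else 0)
      = (p : ℕ) := by
    rw [Fin.sum_univ_succ]
    simp only [lt_self_iff_false, false_and, if_false, zero_add]
    have : ∀ b : Fin n, ((0:Fin (n+1)) < b.succ ∧ insPerm p e b.succ < insPerm p e 0)
        ↔ ((e b : ℕ) < p) := by
      intro b
      simp only [insPerm_succ, insPerm_zero]
      constructor
      · rintro ⟨-, h⟩
        rw [Fin.succAbove_lt_iff_castSucc_lt] at h
        exact_mod_cast h
      · intro h
        refine ⟨Fin.succ_pos b, ?_⟩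
        rw [Fin.succAbove_lt_iff_castSucc_lt]
        exact_mod_cast h
    simp only [this]
    rw [Equiv.sum_comp e (fun j : Fin n => if (j:ℕ) < p then (1:ℕ) else 0)]
    rw [← Finset.card_filter]
    exact card_filter_val_lt n p (Fin.is_le p)
  rw [h1]
  congr 1
  refine Finset.sum_congr rfl fun a _ => ?_
  rw [Fin.sum_univ_succ]
  simp [Fin.succ_lt_succ_iff, Fin.succAbove_lt_succAbove_iff]

lemma insPerm_bijective (n : ℕ) :
    Function.Bijective (fun pe : Fin (n+1) × Equiv.Perm (Fin n) => insPerm pe.1 pe.2) := by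
  rw [Fintype.bijective_iff_injective_and_card]
  constructor
  · rintro ⟨p, e⟩ ⟨q, f⟩ h
    simp only at h
    have hp : p = q := by
      have := congrArg (fun σ : Equiv.Perm (Fin (n+1)) => σ 0) h
      simpa using this
    subst hp
    have he : e = f := by
      ext i
      have := congrArg (fun σ : Equiv.Perm (Fin (n+1)) => σ i.succ) h
      simp only [insPerm_succ] at this
      exact congrArg Fin.val (Fin.succAbove_right_injective this)
    rw [he]
  · simp [Fintype.card_perm, Nat.factorial_succ]

lemma numPerms_recur (i n : ℕ) (h : i ≤ n) :
    numPermsWithInversions i (n+1) = ∑ j ∈ Finset.range (i+1), numPermsWithInversions j n := by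
  have h1 : numPermsWithInversions i (n+1)
      = (Finset.univ.filter (fun pe : Fin (n+1) × Equiv.Perm (Fin n) =>
          (pe.1 : ℕ) + permInversions n pe.2 = i)).card := by
    rw [numPermsWithInversions]
    refine (Finset.card_bij (fun pe _ => insPerm pe.1 pe.2) ?_ ?_ ?_).symm
    · intro pe hpe
      simp only [Finset.mem_filter, Finset.mem_univ, true_and] at hpe ⊢
      rw [inv_insPerm]; exact hpe
    · intro a _ b _ hab
      exact (insPerm_bijective n).1 hab
    · intro σ hσ
      obtain ⟨pe, hpe⟩ := (insPerm_bijective n).2 σ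
      refine ⟨pe, ?_, hpe⟩
      simp only [Finset.mem_filter, Finset.mem_univ, true_and] at hσ ⊢
      rw [← hσ, ← hpe, inv_insPerm]
  rw [h1, Finset.card_filter, Fintype.sum_prod_type]
  have h2 : ∀ p : Fin (n+1), (∑ e : Equiv.Perm (Fin n),
      if (p : ℕ) + permInversions n e = i then 1 else 0)
      = if (p:ℕ) ≤ i then numPermsWithInversions (i - p) n else 0 := by
    intro p
    by_cases hp : (p:ℕ) ≤ i
    · rw [if_pos hp, numPermsWithInversions, Finset.card_filter]
      refine Finset.sum_congr rfl fun e _ => ?_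
      congr 1
      simp only [eq_iff_iff]
      omega
    · rw [if_neg hp]
      refine Finset.sum_eq_zero fun e _ => ?_
      rw [if_neg]; omega
  simp only [h2]
  rw [Fin.sum_univ_eq_sum_range (fun p => if p ≤ i then numPermsWithInversions (i - p) n else 0)]
  rw [← Finset.sum_filter]
  have h3 : (Finset.range (n+1)).filter (fun p => p ≤ i) = Finset.range (i+1) := by
    ext x; simp; omega
  rw [h3]
  have h4 := Finset.sum_range_reflect (fun j => numPermsWithInversions j n) (i+1)
  simp only [Nat.add_sub_cancel] at h4
  rw [← h4]

lemma strictMono_perm_eq_one (n : ℕ) (σ : Equiv.Perm (Fin n)) (h : StrictMono σ) : σ = 1 := by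
  have key : (StrictMono.orderIsoOfSurjective σ h σ.surjective : Fin n ≃o Fin n)
      = OrderIso.refl _ := Subsingleton.elim _ _
  ext x
  have h1 := congrArg (fun g : Fin n ≃o Fin n => g x) key
  have h2 : σ x = x := by simpa using h1
  exact congrArg Fin.val h2

lemma numPerms_zero (n : ℕ) : numPermsWithInversions 0 n = 1 := by
  rw [numPermsWithInversions]
  have hset : (univ.filter fun σ : Equiv.Perm (Fin n) => permInversions n σ = 0) = {1} := by
    ext σ
    simp only [mem_filter, mem_univ, true_and, mem_singleton]
    constructor
    · intro h0
      have hmono : StrictMono σ := by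
        intro a b hab
        by_contra hc
        push_neg at hc
        have hne : σ b ≠ σ a := fun h => absurd (σ.injective h) (ne_of_gt hab)
        have hlt : σ b < σ a := lt_of_le_of_ne hc hne
        have hmem : (a, b) ∈ univ.filter (fun p : Fin n × Fin n => p.1 < p.2 ∧ σ p.2 < σ p.1) := by
          simp [hab, hlt]
        rw [permInversions, Finset.card_eq_zero] at h0
        rw [h0] at hmem
        exact absurd hmem (Finset.notMem_empty _)
      exact strictMono_perm_eq_one n σ hmono
    · rintro rfl
      rw [permInversions, Finset.card_eq_zero, Finset.filter_eq_empty_iff]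
      rintro p -
      rintro ⟨h1, h2⟩
      simp only [Equiv.Perm.one_apply] at h2
      exact absurd (h1.trans h2) (lt_irrefl _)
  rw [hset, Finset.card_singleton]

open Polynomial in
/-- Discrete antiderivative: for any rational polynomial `g` there is `G` with
`G(x+1) - G(x) = g(x)` and `natDegree G ≤ natDegree g + 1`. -/
lemma antider (d : ℕ) : ∀ g : Polynomial ℚ, g.natDegree ≤ d →
    ∃ G : Polynomial ℚ, G.natDegree ≤ d + 1 ∧ ∀ x : ℚ, G.eval (x+1) - G.eval x = g.eval x := by
  induction d with
  | zero =>
    intro g hg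
    refine ⟨C (g.coeff 0) * X, ?_, ?_⟩
    · exact Polynomial.natDegree_mul_le.trans (by simp)
    · intro x
      rw [Polynomial.eq_C_of_natDegree_le_zero hg]
      simp
      ring
  | succ d ih =>
    intro g hg
    set c : ℚ := g.coeff (d+1) with hc
    set q : Polynomial ℚ := (X + 1)^(d+2) - X^(d+2) with hq
    have hd2 : ((d:ℚ) + 2) ≠ 0 := by positivity
    have hqcoeff : ∀ N, q.coeff N = (Nat.choose (d+2) N : ℚ) - if N = d+2 then 1 else 0 := by
      intro N
      rw [hq, Polynomial.coeff_sub, Polynomial.coeff_X_add_one_pow, Polynomial.coeff_X_pow]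
    set h : Polynomial ℚ := g - C (c/(d+2)) * q with hh
    have hhd : h.natDegree ≤ d := by
      rw [Polynomial.natDegree_le_iff_coeff_eq_zero]
      intro N hN
      rw [hh, Polynomial.coeff_sub, Polynomial.coeff_C_mul, hqcoeff]
      rcases eq_or_lt_of_le (Nat.succ_le_of_lt hN) with hN1 | hN1
      · rw [← hN1]
        rw [if_neg (by omega)]
        have : (Nat.choose (d+2) (d+1) : ℚ) = (d:ℚ) + 2 := by
          rw [Nat.choose_succ_self_right]
          push_cast; ring
        rw [this]
        field_simp
        simp [hc]
      · have hgN : g.coeff N = 0 := Polynomial.coeff_eq_zero_of_natDegree_lt (lt_of_le_of_lt hg hN1)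
        rw [hgN]
        rcases eq_or_lt_of_le (Nat.succ_le_of_lt hN1) with hN2 | hN2
        · rw [← hN2, if_pos rfl, Nat.choose_self]
          simp
        · rw [if_neg (by omega), Nat.choose_eq_zero_of_lt hN2]
          simp
    obtain ⟨H, hHd, hHe⟩ := ih h hhd
    refine ⟨C (c/(d+2)) * X^(d+2) + H, ?_, ?_⟩
    · refine Polynomial.natDegree_add_le_iff_left _ _ (hHd.trans (by omega)) |>.mpr ?_
      exact Polynomial.natDegree_mul_le.trans (by simp)
    · intro x
      have hHx := hHe x
      have hhx : h.eval x = g.eval x - (c/(d+2)) * q.eval x := by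
        rw [hh]; simp
      have hqx : q.eval x = (x+1)^(d+2) - x^(d+2) := by rw [hq]; simp
      simp only [Polynomial.eval_add, Polynomial.eval_mul, Polynomial.eval_C,
        Polynomial.eval_pow, Polynomial.eval_X]
      rw [hqx] at hhx
      rw [hhx] at hHx
      linear_combination hHx

open Polynomial in
lemma exists_poly_eq (i : ℕ) :
    ∃ f : Polynomial ℚ, f.degree = i ∧
      ∀ᶠ n : ℕ in atTop, (numPermsWithInversions i n : ℚ) = f.eval (n : ℚ) := by
  induction i using Nat.strong_induction_on with
  | _ i ih =>
  match i with
  | 0 =>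
    refine ⟨1, Polynomial.degree_one, Eventually.of_forall fun n => ?_⟩
    simp [numPerms_zero]
  | (i'+1) =>
    -- choose polynomials for all smaller indices
    have hch : ∀ j, ∃ f : Polynomial ℚ, j < i'+1 → (f.degree = j ∧
        ∀ᶠ n : ℕ in atTop, (numPermsWithInversions j n : ℚ) = f.eval (n : ℚ)) := by
      intro j
      by_cases hj : j < i'+1
      · obtain ⟨f, hf⟩ := ih j hj
        exact ⟨f, fun _ => hf⟩
      · exact ⟨0, fun hlt => absurd hlt hj⟩
    choose F hF using hch
    set g : Polynomial ℚ := ∑ j ∈ Finset.range (i'+1), F j with hgdef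
    have hdegF : ∀ j, j < i'+1 → (F j).degree = j := fun j hj => (hF j hj).1
    have hdeglow : (∑ j ∈ Finset.range i', F j).degree < (i' : WithBot ℕ) := by
      apply lt_of_le_of_lt (Polynomial.degree_sum_le _ _)
      rw [Finset.sup_lt_iff (WithBot.bot_lt_coe _)]
      intro j hj
      rw [hdegF j ((Finset.mem_range.1 hj).trans (Nat.lt_succ_self i'))]
      exact_mod_cast Finset.mem_range.1 hj
    have hgdeg : g.degree = (i' : WithBot ℕ) := by
      rw [hgdef, Finset.sum_range_succ,
        Polynomial.degree_add_eq_right_of_degree_lt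
          (by rw [hdegF i' (Nat.lt_succ_self _)]; exact hdeglow)]
      exact hdegF i' (Nat.lt_succ_self _)
    have hgnat : g.natDegree = i' := Polynomial.natDegree_eq_of_degree_eq_some hgdeg
    have hgne : g ≠ 0 := fun h0 => by
      rw [h0, Polynomial.degree_zero] at hgdeg
      exact absurd hgdeg.symm (by simp)
    obtain ⟨G, hGd, hGe⟩ := antider i' g hgnat.le
    -- exact degree of G
    have hcompeq : G.comp (X + 1) - G = g := by
      apply Polynomial.funext
      intro r
      rw [Polynomial.eval_sub, Polynomial.eval_comp]
      simp only [Polynomial.eval_add, Polynomial.eval_X, Polynomial.eval_one]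
      exact hGe r
    have hX1 : (X + 1 : Polynomial ℚ).natDegree = 1 := by
      simpa using Polynomial.natDegree_X_add_C (1 : ℚ)
    have hGne : G ≠ 0 := by
      rintro rfl
      rw [Polynomial.zero_comp, sub_zero] at hcompeq
      exact hgne hcompeq.symm
    have hlc : (G.comp (X+1)).leadingCoeff = G.leadingCoeff := by
      rw [Polynomial.leadingCoeff_comp (by rw [hX1]; exact one_ne_zero)]
      have : (X + 1 : Polynomial ℚ).leadingCoeff = 1 := by
        simpa using (Polynomial.monic_X_add_C (1 : ℚ)).leadingCoeff
      rw [this, one_pow, mul_one]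
    have hcompne : G.comp (X+1) ≠ 0 := by
      intro h0
      apply hGne
      rw [← Polynomial.leadingCoeff_eq_zero, ← hlc, h0, Polynomial.leadingCoeff_zero]
    have hdegcomp : (G.comp (X+1)).degree = G.degree := by
      rw [Polynomial.degree_eq_natDegree hcompne, Polynomial.degree_eq_natDegree hGne,
        Polynomial.natDegree_comp, hX1, mul_one]
    have hlt : g.degree < G.degree := by
      rw [← hcompeq]
      exact lt_of_lt_of_le (Polynomial.degree_sub_lt hdegcomp hcompne hlc) hdegcomp.le
    have hnatG : G.natDegree = i' + 1 := by
      have h1 : (i' : WithBot ℕ) < G.degree := hgdeg ▸ hlt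
      rw [Polynomial.degree_eq_natDegree hGne] at h1
      have h2 : i' < G.natDegree := by exact_mod_cast h1
      omega
    have hGdeg : G.degree = ((i'+1 : ℕ) : WithBot ℕ) := by
      rw [Polynomial.degree_eq_natDegree hGne, hnatG]
    -- pick a threshold
    have hev : ∀ᶠ n : ℕ in atTop, (i'+1 ≤ n ∧
        ∀ j ∈ Finset.range (i'+1), (numPermsWithInversions j n : ℚ) = (F j).eval (n : ℚ)) := by
      refine (eventually_ge_atTop (i'+1)).and ?_
      exact (Filter.eventually_all_finset _).2 fun j hj => (hF j (Finset.mem_range.1 hj)).2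
    obtain ⟨N, hN⟩ := eventually_atTop.1 hev
    set f : Polynomial ℚ := G + C ((numPermsWithInversions (i'+1) N : ℚ) - G.eval (N : ℚ)) with hfdef
    have hfdeg : f.degree = ((i'+1 : ℕ) : WithBot ℕ) := by
      rw [hfdef, Polynomial.degree_add_eq_left_of_degree_lt, hGdeg]
      refine lt_of_le_of_lt Polynomial.degree_C_le ?_
      rw [hGdeg]
      exact_mod_cast Nat.succ_pos i'
    have heval : ∀ n : ℕ, N ≤ n → (numPermsWithInversions (i'+1) n : ℚ) = f.eval (n : ℚ) := by
      intro n hn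
      induction n, hn using Nat.le_induction with
      | base => rw [hfdef]; simp
      | succ n hn IH =>
        have hNn := hN n hn
        have hrec := numPerms_recur (i'+1) n (le_trans (hN N le_rfl).1 hn)
        rw [Finset.sum_range_succ] at hrec
        have hcast : (numPermsWithInversions (i'+1) (n+1) : ℚ)
            = (∑ j ∈ Finset.range (i'+1), (numPermsWithInversions j n : ℚ))
              + (numPermsWithInversions (i'+1) n : ℚ) := by
          rw [hrec]; push_cast; ring
        have hsum : (∑ j ∈ Finset.range (i'+1), (numPermsWithInversions j n : ℚ))
            = g.eval (n : ℚ) := by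
          rw [hgdef, Polynomial.eval_finset_sum]
          exact Finset.sum_congr rfl fun j hj => hNn.2 j hj
        have hfstep : f.eval ((n : ℚ) + 1) = f.eval (n : ℚ) + g.eval (n : ℚ) := by
          have := hGe (n : ℚ)
          rw [hfdef]
          simp only [Polynomial.eval_add, Polynomial.eval_C]
          linarith
        rw [hcast, hsum, IH]
        push_cast
        rw [hfstep]
        ring
    exact ⟨f, hfdeg, eventually_atTop.2 ⟨N, heval⟩⟩

/-- For each fixed `i ≥ 1`, there is a polynomial `f ∈ ℚ[t]` of degree `i` such that the
number of permutations of `{1, …, n}` with exactly `i` inversions equals `f(n)` for all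
sufficiently large `n`. -/
theorem numPermsWithInversions_eventually_polynomial (i : ℕ) (hi : 1 ≤ i) :
    ∃ f : Polynomial ℚ, f.degree = i ∧
      ∀ᶠ n : ℕ in atTop, (numPermsWithInversions i n : ℚ) = f.eval (n : ℚ) := by
  exact exists_poly_eq i
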